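/- The symmetric group S_5 on five letters is multifold-factorizable. -/

import Mathlib

open Pointwise

/-- A finite group `G` has a `k`-fold factorization of the form `(a 0, …, a (k-1))`:
there are subsets `A 0, …, A (k-1)` of `G` with `|A i| = a i`, `|G| = a 0 ⋯ a (k-1)`,
and the setwise product `A 0 ⋯ A (k-1)` equals `G`. -/
def HasFactorization (G : Type*) [Group G] {k : ℕ} (a : Fin k → ℕ) : Prop :=
  ∃ A : Fin k → Set G,
    (∀ i, Nat.card (A i) = a i) ∧
    Nat.card G = ∏ i, a i ∧
    (List.ofFn A).prod = (Set.univ : Set G)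

/-- `G` is `k`-factorizable: for every factorization `|G| = a 1 ⋯ a k` into integers
`a i > 1`, `G` has a `k`-fold factorization of the form `(a 1, …, a k)`. -/
def IsKFactorizable (G : Type*) [Group G] (k : ℕ) : Prop :=
  ∀ a : Fin k → ℕ, (∀ i, 1 < a i) → Nat.card G = ∏ i, a i → HasFactorization G a

/-- `G` is multifold-factorizable if it is `k`-factorizable for every `k ≥ 2`. -/
def IsMultifoldFactorizable (G : Type*) [Group G] : Prop :=
  ∀ k : ℕ, 2 ≤ k → IsKFactorizable G k

set_option maxRecDepth 100000

abbrev G5 := Equiv.Perm (Fin 5)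

def LFact (l : List ℕ) : Prop :=
  ∃ L : List (Set G5), L.map (fun s : Set G5 => Nat.card s) = l ∧ L.prod = (Set.univ : Set G5)

lemma coe_list_prod (L : List (Finset G5)) :
    ((L.prod : Finset G5) : Set G5) = (L.map (fun F => (F : Set G5))).prod := by
  induction L with
  | nil => simp
  | cons F L ih => simp [Finset.coe_mul, ih]

lemma map_card_coe (L : List (Finset G5)) :
    List.map (fun s : Set G5 => Nat.card s) (L.map (fun F => (F : Set G5)))
      = L.map Finset.card := by
  induction L with
  | nil => simp
  | cons F L ih => simpa [Nat.card_coe_set_eq, Set.ncard_coe_finset] using ih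

lemma lfact_of_finsets (L : List (Finset G5)) (l : List ℕ)
    (hc : L.map Finset.card = l) (hp : L.prod.card = 120) : LFact l := by
  refine ⟨L.map (fun F => (F : Set G5)), ?_, ?_⟩
  · rw [← hc]
    exact map_card_coe L
  · rw [← coe_list_prod]
    have h : L.prod = Finset.univ := Finset.eq_univ_of_card _ (by
      rw [hp, Fintype.card_perm]; decide)
    rw [h, Finset.coe_univ]

lemma natCard_listProd_le (L : List (Set G5)) :
    Nat.card L.prod ≤ (L.map (fun s : Set G5 => Nat.card s)).prod := by
  induction L with
  | nil => simp
  | cons s L ih =>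
    simp only [List.prod_cons, List.map_cons]
    calc Nat.card ↥(s * L.prod) ≤ Nat.card s * Nat.card L.prod := Set.natCard_mul_le
    _ ≤ Nat.card s * (L.map (fun s : Set G5 => Nat.card s)).prod := Nat.mul_le_mul_left _ ih

lemma lfact_merge (l1 l2 : List ℕ) (x y : ℕ)
    (hall : (l1 ++ x :: y :: l2).prod = 120)
    (h : LFact (l1 ++ x :: y :: l2)) : LFact (l1 ++ (x * y) :: l2) := by
  obtain ⟨L, hmap, hprod⟩ := h
  rw [List.map_eq_append_iff] at hmap
  obtain ⟨L1, L2, rfl, hm1, hm2⟩ := hmap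
  rw [List.map_eq_cons_iff] at hm2
  obtain ⟨S, L2', rfl, hS, hm2⟩ := hm2
  rw [List.map_eq_cons_iff] at hm2
  obtain ⟨T, L2'', rfl, hT, hm2⟩ := hm2
  have hassoc : (L1 ++ (S * T) :: L2'').prod = (L1 ++ S :: T :: L2'').prod := by
    simp [List.prod_append, mul_assoc]
  have hcard : Nat.card ↥(S * T) = x * y := by
    have hle : Nat.card ↥(S * T) ≤ x * y := by
      rw [← hS, ← hT]; exact Set.natCard_mul_le
    rcases Nat.lt_or_ge (Nat.card ↥(S * T)) (x * y) with hlt | hge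
    · exfalso
      have h120 : (120 : ℕ) = Nat.card ((L1 ++ (S * T) :: L2'').prod : Set G5) := by
        rw [hassoc, hprod]
        rw [Nat.card_univ, Nat.card_eq_fintype_card, Fintype.card_perm]
        decide
      have hle2 : Nat.card ((L1 ++ (S * T) :: L2'').prod : Set G5)
          ≤ ((L1 ++ (S * T) :: L2'').map (fun s : Set G5 => Nat.card s)).prod := natCard_listProd_le _
      rw [List.map_append, List.map_cons, hm1, hm2] at hle2
      have hprod12 : (l1 ++ x :: y :: l2).prod = l1.prod * (x * (y * l2.prod)) := by
        simp [List.prod_append]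
      have hpos1 : 0 < l1.prod := by
        rcases Nat.eq_zero_or_pos l1.prod with h0 | h; · rw [hprod12, h0] at hall; simp at hall
        exact h
      have hpos2 : 0 < l2.prod := by
        rcases Nat.eq_zero_or_pos l2.prod with h0 | h
        · rw [hprod12, h0] at hall; simp at hall
        exact h
      have : (l1 ++ Nat.card ↥(S * T) :: l2).prod < 120 := by
        rw [← hall, hprod12]
        simp only [List.prod_append, List.prod_cons]
        calc l1.prod * (Nat.card ↥(S * T) * l2.prod)
            < l1.prod * (x * y * l2.prod) := by
              nlinarith [hpos1, hpos2, hlt]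
          _ = l1.prod * (x * (y * l2.prod)) := by ring
      have hge120 : (120:ℕ) ≤ (l1 ++ Nat.card ↥(S * T) :: l2).prod := by
        rw [h120]
        calc Nat.card ((L1 ++ (S * T) :: L2'').prod : Set G5)
            ≤ ((L1 ++ (S * T) :: L2'').map (fun s : Set G5 => Nat.card s)).prod := natCard_listProd_le _
          _ = (l1 ++ Nat.card ↥(S * T) :: l2).prod := by
              rw [List.map_append, List.map_cons, hm1, hm2]
      omega
    · omega
  exact ⟨L1 ++ (S * T) :: L2'', by rw [List.map_append, List.map_cons, hm1, hm2, hcard], by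
    rw [hassoc, hprod]⟩

lemma base_2_2_2_3_5 : LFact [2, 2, 2, 3, 5] :=
  lfact_of_finsets
    [({(1 : G5), (Equiv.swap (0:Fin 5) 1 * Equiv.swap (2:Fin 5) 3)} : Finset G5),
     ({(1 : G5), (Equiv.swap (0:Fin 5) 2 * Equiv.swap (1:Fin 5) 3)} : Finset G5),
     ({(1 : G5), (Equiv.swap (0:Fin 5) 1)} : Finset G5),
     ({(1 : G5), (Equiv.swap (0:Fin 5) 1 * Equiv.swap (1:Fin 5) 2), (Equiv.swap (0:Fin 5) 2 * Equiv.swap (2:Fin 5) 1)} : Finset G5),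
     ({(1 : G5), (Equiv.swap (0:Fin 5) 1 * Equiv.swap (1:Fin 5) 2 * Equiv.swap (2:Fin 5) 3 * Equiv.swap (3:Fin 5) 4), (Equiv.swap (0:Fin 5) 2 * Equiv.swap (2:Fin 5) 4 * Equiv.swap (4:Fin 5) 1 * Equiv.swap (1:Fin 5) 3), (Equiv.swap (0:Fin 5) 3 * Equiv.swap (3:Fin 5) 1 * Equiv.swap (1:Fin 5) 4 * Equiv.swap (4:Fin 5) 2), (Equiv.swap (0:Fin 5) 4 * Equiv.swap (4:Fin 5) 3 * Equiv.swap (3:Fin 5) 2 * Equiv.swap (2:Fin 5) 1)} : Finset G5)]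
    [2, 2, 2, 3, 5] (by decide) (by decide)

lemma base_2_2_2_5_3 : LFact [2, 2, 2, 5, 3] :=
  lfact_of_finsets
    [({(1 : G5), (Equiv.swap (0:Fin 5) 3 * Equiv.swap (1:Fin 5) 4)} : Finset G5),
     ({(1 : G5), (Equiv.swap (0:Fin 5) 1)} : Finset G5),
     ({(1 : G5), (Equiv.swap (1:Fin 5) 4)} : Finset G5),
     ({(1 : G5), (Equiv.swap (2:Fin 5) 4), (Equiv.swap (1:Fin 5) 2), (Equiv.swap (1:Fin 5) 3 * Equiv.swap (3:Fin 5) 2), (Equiv.swap (0:Fin 5) 2 * Equiv.swap (2:Fin 5) 1)} : Finset G5),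
     ({(1 : G5), (Equiv.swap (3:Fin 5) 4), (Equiv.swap (2:Fin 5) 3)} : Finset G5)]
    [2, 2, 2, 5, 3] (by decide) (by decide)

lemma base_2_2_3_2_5 : LFact [2, 2, 3, 2, 5] :=
  lfact_of_finsets
    [({(1 : G5), (Equiv.swap (0:Fin 5) 1 * Equiv.swap (2:Fin 5) 3)} : Finset G5),
     ({(1 : G5), (Equiv.swap (0:Fin 5) 2 * Equiv.swap (1:Fin 5) 3)} : Finset G5),
     ({(1 : G5), (Equiv.swap (0:Fin 5) 1 * Equiv.swap (1:Fin 5) 2), (Equiv.swap (0:Fin 5) 2 * Equiv.swap (2:Fin 5) 1)} : Finset G5),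
     ({(1 : G5), (Equiv.swap (0:Fin 5) 1)} : Finset G5),
     ({(1 : G5), (Equiv.swap (0:Fin 5) 1 * Equiv.swap (1:Fin 5) 2 * Equiv.swap (2:Fin 5) 3 * Equiv.swap (3:Fin 5) 4), (Equiv.swap (0:Fin 5) 2 * Equiv.swap (2:Fin 5) 4 * Equiv.swap (4:Fin 5) 1 * Equiv.swap (1:Fin 5) 3), (Equiv.swap (0:Fin 5) 3 * Equiv.swap (3:Fin 5) 1 * Equiv.swap (1:Fin 5) 4 * Equiv.swap (4:Fin 5) 2), (Equiv.swap (0:Fin 5) 4 * Equiv.swap (4:Fin 5) 3 * Equiv.swap (3:Fin 5) 2 * Equiv.swap (2:Fin 5) 1)} : Finset G5)]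
    [2, 2, 3, 2, 5] (by decide) (by decide)

lemma base_2_2_3_5_2 : LFact [2, 2, 3, 5, 2] :=
  lfact_of_finsets
    [({(1 : G5), (Equiv.swap (1:Fin 5) 2 * Equiv.swap (3:Fin 5) 4)} : Finset G5),
     ({(1 : G5), (Equiv.swap (2:Fin 5) 3 * Equiv.swap (3:Fin 5) 4)} : Finset G5),
     ({(1 : G5), (Equiv.swap (1:Fin 5) 2 * Equiv.swap (2:Fin 5) 3), (Equiv.swap (1:Fin 5) 3 * Equiv.swap (3:Fin 5) 2)} : Finset G5),
     ({(1 : G5), (Equiv.swap (0:Fin 5) 1 * Equiv.swap (1:Fin 5) 2 * Equiv.swap (2:Fin 5) 3 * Equiv.swap (3:Fin 5) 4), (Equiv.swap (0:Fin 5) 2 * Equiv.swap (2:Fin 5) 4 * Equiv.swap (4:Fin 5) 1 * Equiv.swap (1:Fin 5) 3), (Equiv.swap (0:Fin 5) 3 * Equiv.swap (3:Fin 5) 1 * Equiv.swap (1:Fin 5) 4 * Equiv.swap (4:Fin 5) 2), (Equiv.swap (0:Fin 5) 4 * Equiv.swap (4:Fin 5) 3 * Equiv.swap (3:Fin 5)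 2 * Equiv.swap (2:Fin 5) 1)} : Finset G5),
     ({(1 : G5), (Equiv.swap (0:Fin 5) 1)} : Finset G5)]
    [2, 2, 3, 5, 2] (by decide) (by decide)

lemma base_2_2_5_2_3 : LFact [2, 2, 5, 2, 3] :=
  lfact_of_finsets
    [({(1 : G5), (Equiv.swap (0:Fin 5) 1)} : Finset G5),
     ({(1 : G5), (Equiv.swap (1:Fin 5) 4 * Equiv.swap (2:Fin 5) 3)} : Finset G5),
     ({(1 : G5), (Equiv.swap (0:Fin 5) 1 * Equiv.swap (1:Fin 5) 2 * Equiv.swap (2:Fin 5) 3 * Equiv.swap (3:Fin 5) 4), (Equiv.swap (0:Fin 5) 2 * Equiv.swap (2:Fin 5) 4 * Equiv.swap (4:Fin 5) 1 * Equiv.swap (1:Fin 5) 3), (Equiv.swap (0:Fin 5) 3 * Equiv.swap (3:Fin 5) 1 * Equiv.swap (1:Fin 5) 4 * Equiv.swap (4:Fin 5) 2), (Equiv.swap (0:Fin 5) 4 * Equiv.swap (4:Fin 5) 3 * Equiv.swap (3:Fin 5) 2 * Equiv.swap (2:Fin 5) 1)} : Finset G5),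
     ({(1 : G5), (Equiv.swap (2:Fin 5) 3 * Equiv.swap (3:Fin 5) 4)} : Finset G5),
     ({(1 : G5), (Equiv.swap (1:Fin 5) 2 * Equiv.swap (3:Fin 5) 4), (Equiv.swap (0:Fin 5) 4 * Equiv.swap (4:Fin 5) 2 * Equiv.swap (2:Fin 5) 3 * Equiv.swap (3:Fin 5) 1)} : Finset G5)]
    [2, 2, 5, 2, 3] (by decide) (by decide)

lemma base_2_2_5_3_2 : LFact [2, 2, 5, 3, 2] :=
  lfact_of_finsets
    [({(1 : G5), (Equiv.swap (0:Fin 5) 3 * Equiv.swap (2:Fin 5) 4)} : Finset G5),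
     ({(1 : G5), (Equiv.swap (0:Fin 5) 2)} : Finset G5),
     ({(1 : G5), (Equiv.swap (1:Fin 5) 2), (Equiv.swap (1:Fin 5) 3 * Equiv.swap (3:Fin 5) 2), (Equiv.swap (1:Fin 5) 4 * Equiv.swap (4:Fin 5) 3 * Equiv.swap (3:Fin 5) 2), (Equiv.swap (0:Fin 5) 1)} : Finset G5),
     ({(1 : G5), (Equiv.swap (2:Fin 5) 3), (Equiv.swap (2:Fin 5) 4 * Equiv.swap (4:Fin 5) 3)} : Finset G5),
     ({(1 : G5), (Equiv.swap (3:Fin 5) 4)} : Finset G5)]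
    [2, 2, 5, 3, 2] (by decide) (by decide)

lemma base_2_3_2_2_5 : LFact [2, 3, 2, 2, 5] :=
  lfact_of_finsets
    [({(1 : G5), (Equiv.swap (0:Fin 5) 1)} : Finset G5),
     ({(1 : G5), (Equiv.swap (0:Fin 5) 1 * Equiv.swap (1:Fin 5) 2), (Equiv.swap (0:Fin 5) 2 * Equiv.swap (2:Fin 5) 1)} : Finset G5),
     ({(1 : G5), (Equiv.swap (0:Fin 5) 1 * Equiv.swap (2:Fin 5) 3)} : Finset G5),
     ({(1 : G5), (Equiv.swap (0:Fin 5) 2 * Equiv.swap (1:Fin 5) 3)} : Finset G5),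
     ({(1 : G5), (Equiv.swap (0:Fin 5) 1 * Equiv.swap (1:Fin 5) 2 * Equiv.swap (2:Fin 5) 3 * Equiv.swap (3:Fin 5) 4), (Equiv.swap (0:Fin 5) 2 * Equiv.swap (2:Fin 5) 4 * Equiv.swap (4:Fin 5) 1 * Equiv.swap (1:Fin 5) 3), (Equiv.swap (0:Fin 5) 3 * Equiv.swap (3:Fin 5) 1 * Equiv.swap (1:Fin 5) 4 * Equiv.swap (4:Fin 5) 2), (Equiv.swap (0:Fin 5) 4 * Equiv.swap (4:Fin 5) 3 * Equiv.swap (3:Fin 5) 2 * Equiv.swap (2:Fin 5) 1)} : Finset G5)]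
    [2, 3, 2, 2, 5] (by decide) (by decide)

lemma base_2_3_2_5_2 : LFact [2, 3, 2, 5, 2] :=
  lfact_of_finsets
    [({(1 : G5), (Equiv.swap (0:Fin 5) 1)} : Finset G5),
     ({(1 : G5), (Equiv.swap (1:Fin 5) 2 * Equiv.swap (3:Fin 5) 4), (Equiv.swap (0:Fin 5) 1 * Equiv.swap (1:Fin 5) 3 * Equiv.swap (3:Fin 5) 2 * Equiv.swap (2:Fin 5) 4)} : Finset G5),
     ({(1 : G5), (Equiv.swap (2:Fin 5) 4 * Equiv.swap (4:Fin 5) 3)} : Finset G5),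
     ({(1 : G5), (Equiv.swap (0:Fin 5) 4 * Equiv.swap (4:Fin 5) 3 * Equiv.swap (3:Fin 5) 2 * Equiv.swap (2:Fin 5) 1), (Equiv.swap (0:Fin 5) 3 * Equiv.swap (3:Fin 5) 1 * Equiv.swap (1:Fin 5) 4 * Equiv.swap (4:Fin 5) 2), (Equiv.swap (0:Fin 5) 2 * Equiv.swap (2:Fin 5) 4 * Equiv.swap (4:Fin 5) 1 * Equiv.swap (1:Fin 5) 3), (Equiv.swap (0:Fin 5) 1 * Equiv.swap (1:Fin 5) 2 * Equiv.swap (2:Fin 5) 3 * Equiv.swap (3:Fin 5) 4)} : Finset G5),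
     ({(1 : G5), (Equiv.swap (1:Fin 5) 4 * Equiv.swap (2:Fin 5) 3)} : Finset G5)]
    [2, 3, 2, 5, 2] (by decide) (by decide)

lemma base_2_3_5_2_2 : LFact [2, 3, 5, 2, 2] :=
  lfact_of_finsets
    [({(1 : G5), (Equiv.swap (3:Fin 5) 4)} : Finset G5),
     ({(1 : G5), (Equiv.swap (2:Fin 5) 3), (Equiv.swap (2:Fin 5) 3 * Equiv.swap (3:Fin 5) 4)} : Finset G5),
     ({(1 : G5), (Equiv.swap (1:Fin 5) 2), (Equiv.swap (1:Fin 5) 2 * Equiv.swap (2:Fin 5) 3), (Equiv.swap (1:Fin 5) 2 * Equiv.swap (2:Fin 5) 3 * Equiv.swap (3:Fin 5) 4), (Equiv.swap (0:Fin 5) 1)} : Finset G5),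
     ({(1 : G5), (Equiv.swap (0:Fin 5) 2)} : Finset G5),
     ({(1 : G5), (Equiv.swap (0:Fin 5) 3 * Equiv.swap (2:Fin 5) 4)} : Finset G5)]
    [2, 3, 5, 2, 2] (by decide) (by decide)

lemma base_2_5_2_2_3 : LFact [2, 5, 2, 2, 3] :=
  lfact_of_finsets
    [({(1 : G5), (Equiv.swap (0:Fin 5) 1)} : Finset G5),
     ({(1 : G5), (Equiv.swap (0:Fin 5) 4 * Equiv.swap (4:Fin 5) 3 * Equiv.swap (3:Fin 5) 2 * Equiv.swap (2:Fin 5) 1), (Equiv.swap (0:Fin 5) 3 * Equiv.swap (3:Fin 5) 1 * Equiv.swap (1:Fin 5) 4 * Equiv.swap (4:Fin 5) 2), (Equiv.swap (0:Fin 5) 2 * Equiv.swap (2:Fin 5) 4 * Equiv.swap (4:Fin 5) 1 * Equiv.swap (1:Fin 5) 3), (Equiv.swap (0:Fin 5) 1 * Equiv.swap (1:Fin 5) 2 * Equiv.swap (2:Fin 5) 3 * Equiv.swap (3:Fin 5) 4)} : Finset G5),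
     ({(1 : G5), (Equiv.swap (1:Fin 5) 3 * Equiv.swap (2:Fin 5) 4)} : Finset G5),
     ({(1 : G5), (Equiv.swap (1:Fin 5) 2 * Equiv.swap (3:Fin 5) 4)} : Finset G5),
     ({(1 : G5), (Equiv.swap (2:Fin 5) 4 * Equiv.swap (4:Fin 5) 3), (Equiv.swap (2:Fin 5) 3 * Equiv.swap (3:Fin 5) 4)} : Finset G5)]
    [2, 5, 2, 2, 3] (by decide) (by decide)

lemma base_2_5_2_3_2 : LFact [2, 5, 2, 3, 2] :=
  lfact_of_finsets
    [({(1 : G5), (Equiv.swap (0:Fin 5) 1)} : Finset G5),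
     ({(1 : G5), (Equiv.swap (0:Fin 5) 4 * Equiv.swap (4:Fin 5) 3 * Equiv.swap (3:Fin 5) 2 * Equiv.swap (2:Fin 5) 1), (Equiv.swap (0:Fin 5) 3 * Equiv.swap (3:Fin 5) 1 * Equiv.swap (1:Fin 5) 4 * Equiv.swap (4:Fin 5) 2), (Equiv.swap (0:Fin 5) 2 * Equiv.swap (2:Fin 5) 4 * Equiv.swap (4:Fin 5) 1 * Equiv.swap (1:Fin 5) 3), (Equiv.swap (0:Fin 5) 1 * Equiv.swap (1:Fin 5) 2 * Equiv.swap (2:Fin 5) 3 * Equiv.swap (3:Fin 5) 4)} : Finset G5),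
     ({(1 : G5), (Equiv.swap (1:Fin 5) 4 * Equiv.swap (4:Fin 5) 3)} : Finset G5),
     ({(1 : G5), (Equiv.swap (2:Fin 5) 4 * Equiv.swap (4:Fin 5) 3), (Equiv.swap (0:Fin 5) 2 * Equiv.swap (2:Fin 5) 4 * Equiv.swap (4:Fin 5) 3 * Equiv.swap (3:Fin 5) 1)} : Finset G5),
     ({(1 : G5), (Equiv.swap (1:Fin 5) 2 * Equiv.swap (3:Fin 5) 4)} : Finset G5)]
    [2, 5, 2, 3, 2] (by decide) (by decide)

lemma base_2_5_3_2_2 : LFact [2, 5, 3, 2, 2] :=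
  lfact_of_finsets
    [({(1 : G5), (Equiv.swap (0:Fin 5) 1)} : Finset G5),
     ({(1 : G5), (Equiv.swap (0:Fin 5) 4 * Equiv.swap (4:Fin 5) 3 * Equiv.swap (3:Fin 5) 2 * Equiv.swap (2:Fin 5) 1), (Equiv.swap (0:Fin 5) 3 * Equiv.swap (3:Fin 5) 1 * Equiv.swap (1:Fin 5) 4 * Equiv.swap (4:Fin 5) 2), (Equiv.swap (0:Fin 5) 2 * Equiv.swap (2:Fin 5) 4 * Equiv.swap (4:Fin 5) 1 * Equiv.swap (1:Fin 5) 3), (Equiv.swap (0:Fin 5) 1 * Equiv.swap (1:Fin 5) 2 * Equiv.swap (2:Fin 5) 3 * Equiv.swap (3:Fin 5) 4)} : Finset G5),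
     ({(1 : G5), (Equiv.swap (1:Fin 5) 3 * Equiv.swap (3:Fin 5) 2), (Equiv.swap (1:Fin 5) 2 * Equiv.swap (2:Fin 5) 3)} : Finset G5),
     ({(1 : G5), (Equiv.swap (2:Fin 5) 4 * Equiv.swap (4:Fin 5) 3)} : Finset G5),
     ({(1 : G5), (Equiv.swap (1:Fin 5) 2 * Equiv.swap (3:Fin 5) 4)} : Finset G5)]
    [2, 5, 3, 2, 2] (by decide) (by decide)

lemma base_3_2_2_2_5 : LFact [3, 2, 2, 2, 5] :=
  lfact_of_finsets
    [({(1 : G5), (Equiv.swap (0:Fin 5) 1 * Equiv.swap (1:Fin 5) 2), (Equiv.swap (0:Fin 5) 2 * Equiv.swap (2:Fin 5) 1)} : Finset G5),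
     ({(1 : G5), (Equiv.swap (0:Fin 5) 1)} : Finset G5),
     ({(1 : G5), (Equiv.swap (0:Fin 5) 1 * Equiv.swap (2:Fin 5) 3)} : Finset G5),
     ({(1 : G5), (Equiv.swap (0:Fin 5) 2 * Equiv.swap (1:Fin 5) 3)} : Finset G5),
     ({(1 : G5), (Equiv.swap (0:Fin 5) 1 * Equiv.swap (1:Fin 5) 2 * Equiv.swap (2:Fin 5) 3 * Equiv.swap (3:Fin 5) 4), (Equiv.swap (0:Fin 5) 2 * Equiv.swap (2:Fin 5) 4 * Equiv.swap (4:Fin 5) 1 * Equiv.swap (1:Fin 5) 3), (Equiv.swap (0:Fin 5) 3 * Equiv.swap (3:Fin 5) 1 * Equiv.swap (1:Fin 5) 4 * Equiv.swap (4:Fin 5) 2), (Equiv.swap (0:Fin 5) 4 * Equiv.swap (4:Fin 5) 3 * Equiv.swap (3:Fin 5) 2 * Equiv.swap (2:Fin 5) 1)} : Finset G5)]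
    [3, 2, 2, 2, 5] (by decide) (by decide)

lemma base_3_2_2_5_2 : LFact [3, 2, 2, 5, 2] :=
  lfact_of_finsets
    [({(1 : G5), (Equiv.swap (2:Fin 5) 3 * Equiv.swap (3:Fin 5) 4), (Equiv.swap (2:Fin 5) 4 * Equiv.swap (4:Fin 5) 3)} : Finset G5),
     ({(1 : G5), (Equiv.swap (1:Fin 5) 2 * Equiv.swap (3:Fin 5) 4)} : Finset G5),
     ({(1 : G5), (Equiv.swap (1:Fin 5) 3 * Equiv.swap (2:Fin 5) 4)} : Finset G5),
     ({(1 : G5), (Equiv.swap (0:Fin 5) 1 * Equiv.swap (1:Fin 5) 2 * Equiv.swap (2:Fin 5) 3 * Equiv.swap (3:Fin 5) 4), (Equiv.swap (0:Fin 5) 2 * Equiv.swap (2:Fin 5) 4 * Equiv.swap (4:Fin 5) 1 * Equiv.swap (1:Fin 5) 3), (Equiv.swap (0:Fin 5) 3 * Equiv.swap (3:Fin 5) 1 * Equiv.swap (1:Fin 5) 4 * Equiv.swap (4:Fin 5) 2), (Equiv.swap (0:Fin 5) 4 * Equiv.swap (4:Fin 5) 3 * Equiv.swap (3:Fin 5)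 2 * Equiv.swap (2:Fin 5) 1)} : Finset G5),
     ({(1 : G5), (Equiv.swap (0:Fin 5) 1)} : Finset G5)]
    [3, 2, 2, 5, 2] (by decide) (by decide)

lemma base_3_2_5_2_2 : LFact [3, 2, 5, 2, 2] :=
  lfact_of_finsets
    [({(1 : G5), (Equiv.swap (1:Fin 5) 2 * Equiv.swap (3:Fin 5) 4), (Equiv.swap (0:Fin 5) 1 * Equiv.swap (1:Fin 5) 3 * Equiv.swap (3:Fin 5) 2 * Equiv.swap (2:Fin 5) 4)} : Finset G5),
     ({(1 : G5), (Equiv.swap (2:Fin 5) 4 * Equiv.swap (4:Fin 5) 3)} : Finset G5),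
     ({(1 : G5), (Equiv.swap (0:Fin 5) 4 * Equiv.swap (4:Fin 5) 3 * Equiv.swap (3:Fin 5) 2 * Equiv.swap (2:Fin 5) 1), (Equiv.swap (0:Fin 5) 3 * Equiv.swap (3:Fin 5) 1 * Equiv.swap (1:Fin 5) 4 * Equiv.swap (4:Fin 5) 2), (Equiv.swap (0:Fin 5) 2 * Equiv.swap (2:Fin 5) 4 * Equiv.swap (4:Fin 5) 1 * Equiv.swap (1:Fin 5) 3), (Equiv.swap (0:Fin 5) 1 * Equiv.swap (1:Fin 5) 2 * Equiv.swap (2:Fin 5) 3 * Equiv.swap (3:Fin 5) 4)} : Finset G5),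
     ({(1 : G5), (Equiv.swap (1:Fin 5) 4 * Equiv.swap (2:Fin 5) 3)} : Finset G5),
     ({(1 : G5), (Equiv.swap (0:Fin 5) 1)} : Finset G5)]
    [3, 2, 5, 2, 2] (by decide) (by decide)

lemma base_3_5_2_2_2 : LFact [3, 5, 2, 2, 2] :=
  lfact_of_finsets
    [({(1 : G5), (Equiv.swap (3:Fin 5) 4), (Equiv.swap (2:Fin 5) 3)} : Finset G5),
     ({(1 : G5), (Equiv.swap (2:Fin 5) 4), (Equiv.swap (1:Fin 5) 2), (Equiv.swap (1:Fin 5) 2 * Equiv.swap (2:Fin 5) 3), (Equiv.swap (0:Fin 5) 1 * Equiv.swap (1:Fin 5) 2)} : Finset G5),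
     ({(1 : G5), (Equiv.swap (1:Fin 5) 4)} : Finset G5),
     ({(1 : G5), (Equiv.swap (0:Fin 5) 1)} : Finset G5),
     ({(1 : G5), (Equiv.swap (0:Fin 5) 3 * Equiv.swap (1:Fin 5) 4)} : Finset G5)]
    [3, 5, 2, 2, 2] (by decide) (by decide)

lemma base_5_2_2_2_3 : LFact [5, 2, 2, 2, 3] :=
  lfact_of_finsets
    [({(1 : G5), (Equiv.swap (0:Fin 5) 1 * Equiv.swap (1:Fin 5) 2 * Equiv.swap (2:Fin 5) 3 * Equiv.swap (3:Fin 5) 4), (Equiv.swap (0:Fin 5) 2 * Equiv.swap (2:Fin 5) 4 * Equiv.swap (4:Fin 5) 1 * Equiv.swap (1:Fin 5) 3), (Equiv.swap (0:Fin 5) 3 * Equiv.swap (3:Fin 5) 1 * Equiv.swap (1:Fin 5) 4 * Equiv.swap (4:Fin 5) 2), (Equiv.swap (0:Fin 5) 4 * Equiv.swap (4:Fin 5) 3 * Equiv.swap (3:Fin 5) 2 * Equiv.swap (2:Fin 5) 1)} : Finset G5),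
     ({(1 : G5), (Equiv.swap (0:Fin 5) 1 * Equiv.swap (2:Fin 5) 3)} : Finset G5),
     ({(1 : G5), (Equiv.swap (0:Fin 5) 2 * Equiv.swap (1:Fin 5) 3)} : Finset G5),
     ({(1 : G5), (Equiv.swap (0:Fin 5) 1)} : Finset G5),
     ({(1 : G5), (Equiv.swap (0:Fin 5) 1 * Equiv.swap (1:Fin 5) 2), (Equiv.swap (0:Fin 5) 2 * Equiv.swap (2:Fin 5) 1)} : Finset G5)]
    [5, 2, 2, 2, 3] (by decide) (by decide)

lemma base_5_2_2_3_2 : LFact [5, 2, 2, 3, 2] :=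
  lfact_of_finsets
    [({(1 : G5), (Equiv.swap (0:Fin 5) 1 * Equiv.swap (1:Fin 5) 2 * Equiv.swap (2:Fin 5) 3 * Equiv.swap (3:Fin 5) 4), (Equiv.swap (0:Fin 5) 2 * Equiv.swap (2:Fin 5) 4 * Equiv.swap (4:Fin 5) 1 * Equiv.swap (1:Fin 5) 3), (Equiv.swap (0:Fin 5) 3 * Equiv.swap (3:Fin 5) 1 * Equiv.swap (1:Fin 5) 4 * Equiv.swap (4:Fin 5) 2), (Equiv.swap (0:Fin 5) 4 * Equiv.swap (4:Fin 5) 3 * Equiv.swap (3:Fin 5) 2 * Equiv.swap (2:Fin 5) 1)} : Finset G5),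
     ({(1 : G5), (Equiv.swap (0:Fin 5) 1 * Equiv.swap (2:Fin 5) 3)} : Finset G5),
     ({(1 : G5), (Equiv.swap (0:Fin 5) 2 * Equiv.swap (1:Fin 5) 3)} : Finset G5),
     ({(1 : G5), (Equiv.swap (0:Fin 5) 1 * Equiv.swap (1:Fin 5) 2), (Equiv.swap (0:Fin 5) 2 * Equiv.swap (2:Fin 5) 1)} : Finset G5),
     ({(1 : G5), (Equiv.swap (0:Fin 5) 1)} : Finset G5)]
    [5, 2, 2, 3, 2] (by decide) (by decide)

lemma base_5_2_3_2_2 : LFact [5, 2, 3, 2, 2] :=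
  lfact_of_finsets
    [({(1 : G5), (Equiv.swap (0:Fin 5) 1 * Equiv.swap (1:Fin 5) 2 * Equiv.swap (2:Fin 5) 3 * Equiv.swap (3:Fin 5) 4), (Equiv.swap (0:Fin 5) 2 * Equiv.swap (2:Fin 5) 4 * Equiv.swap (4:Fin 5) 1 * Equiv.swap (1:Fin 5) 3), (Equiv.swap (0:Fin 5) 3 * Equiv.swap (3:Fin 5) 1 * Equiv.swap (1:Fin 5) 4 * Equiv.swap (4:Fin 5) 2), (Equiv.swap (0:Fin 5) 4 * Equiv.swap (4:Fin 5) 3 * Equiv.swap (3:Fin 5) 2 * Equiv.swap (2:Fin 5) 1)} : Finset G5),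
     ({(1 : G5), (Equiv.swap (0:Fin 5) 1)} : Finset G5),
     ({(1 : G5), (Equiv.swap (0:Fin 5) 1 * Equiv.swap (1:Fin 5) 2), (Equiv.swap (0:Fin 5) 2 * Equiv.swap (2:Fin 5) 1)} : Finset G5),
     ({(1 : G5), (Equiv.swap (0:Fin 5) 1 * Equiv.swap (2:Fin 5) 3)} : Finset G5),
     ({(1 : G5), (Equiv.swap (0:Fin 5) 2 * Equiv.swap (1:Fin 5) 3)} : Finset G5)]
    [5, 2, 3, 2, 2] (by decide) (by decide)

lemma base_5_3_2_2_2 : LFact [5, 3, 2, 2, 2] :=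
  lfact_of_finsets
    [({(1 : G5), (Equiv.swap (0:Fin 5) 1 * Equiv.swap (1:Fin 5) 2 * Equiv.swap (2:Fin 5) 3 * Equiv.swap (3:Fin 5) 4), (Equiv.swap (0:Fin 5) 2 * Equiv.swap (2:Fin 5) 4 * Equiv.swap (4:Fin 5) 1 * Equiv.swap (1:Fin 5) 3), (Equiv.swap (0:Fin 5) 3 * Equiv.swap (3:Fin 5) 1 * Equiv.swap (1:Fin 5) 4 * Equiv.swap (4:Fin 5) 2), (Equiv.swap (0:Fin 5) 4 * Equiv.swap (4:Fin 5) 3 * Equiv.swap (3:Fin 5) 2 * Equiv.swap (2:Fin 5) 1)} : Finset G5),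
     ({(1 : G5), (Equiv.swap (0:Fin 5) 1 * Equiv.swap (1:Fin 5) 2), (Equiv.swap (0:Fin 5) 2 * Equiv.swap (2:Fin 5) 1)} : Finset G5),
     ({(1 : G5), (Equiv.swap (0:Fin 5) 1)} : Finset G5),
     ({(1 : G5), (Equiv.swap (0:Fin 5) 1 * Equiv.swap (2:Fin 5) 3)} : Finset G5),
     ({(1 : G5), (Equiv.swap (0:Fin 5) 2 * Equiv.swap (1:Fin 5) 3)} : Finset G5)]
    [5, 3, 2, 2, 2] (by decide) (by decide)


lemma two_pow_le_prod (l : List ℕ) (h : ∀ x ∈ l, 2 ≤ x) : 2 ^ l.length ≤ l.prod := by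
  induction l with
  | nil => simp
  | cons a l ih =>
    simp only [List.length_cons, List.prod_cons, pow_succ, mul_comm (2 ^ l.length) 2]
    exact Nat.mul_le_mul (h a (List.mem_cons_self (a := a) (l := l)))
      (ih (fun x hx => h x (List.mem_cons_of_mem _ hx)))

lemma lfact_primes (l : List ℕ) (hp : ∀ x ∈ l, Nat.Prime x) (hprod : l.prod = 120) :
    LFact l := by
  have h1 : l.Perm (Nat.primeFactorsList 120) := Nat.primeFactorsList_unique hprod hp
  have h2 : ([2, 2, 2, 3, 5] : List ℕ).Perm (Nat.primeFactorsList 120) :=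
    Nat.primeFactorsList_unique (by norm_num) (by norm_num)
  have hperm : l.Perm [2, 2, 2, 3, 5] := h1.trans h2.symm
  have hlen : l.length = 5 := by simpa using hperm.length_eq
  rcases l with _ | ⟨a, _ | ⟨b, _ | ⟨c, _ | ⟨d, _ | ⟨e, _ | ⟨f, l⟩⟩⟩⟩⟩⟩ <;>
    simp only [List.length_nil, List.length_cons] at hlen <;> try omega
  have ha : a = 2 ∨ a = 3 ∨ a = 5 := by
    have := hperm.mem_iff.mp (show a ∈ [a,b,c,d,e] by simp); simp at this; omega
  have hb : b = 2 ∨ b = 3 ∨ b = 5 := by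
    have := hperm.mem_iff.mp (show b ∈ [a,b,c,d,e] by simp); simp at this; omega
  have hc : c = 2 ∨ c = 3 ∨ c = 5 := by
    have := hperm.mem_iff.mp (show c ∈ [a,b,c,d,e] by simp); simp at this; omega
  have hd : d = 2 ∨ d = 3 ∨ d = 5 := by
    have := hperm.mem_iff.mp (show d ∈ [a,b,c,d,e] by simp); simp at this; omega
  have he : e = 2 ∨ e = 3 ∨ e = 5 := by
    have := hperm.mem_iff.mp (show e ∈ [a,b,c,d,e] by simp); simp at this; omega
  have hpr : a * (b * (c * (d * (e * 1)))) = 120 := by simpa [List.prod_cons] using hprod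
  clear hperm h1 h2 hp hlen
  rcases ha with rfl | rfl | rfl <;> rcases hb with rfl | rfl | rfl <;>
    rcases hc with rfl | rfl | rfl <;> rcases hd with rfl | rfl | rfl <;>
    rcases he with rfl | rfl | rfl <;>
    first
      | (exfalso; omega)
      | exact base_2_2_2_3_5 | exact base_2_2_2_5_3 | exact base_2_2_3_2_5 | exact base_2_2_3_5_2 | exact base_2_2_5_2_3 | exact base_2_2_5_3_2 | exact base_2_3_2_2_5 | exact base_2_3_2_5_2 | exact base_2_3_5_2_2 | exact base_2_5_2_2_3 | exact base_2_5_2_3_2 | exact base_2_5_3_2_2 | exact base_3_2_2_2_5 | exact base_3_2_2_5_2 | exact base_3_2_5_2_2 | exact base_3_5_2_2_2 | exact base_5_2_2_2_3 | exact base_5_2_2_3_2 | exact base_5_2_3_2_2 | exact base_5_3_2_2_2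

lemma lfact_all : ∀ n l, 7 ≤ l.length + n → (∀ x ∈ l, 2 ≤ x) → l.prod = 120 → LFact l := by
  intro n
  induction n with
  | zero =>
    intro l hl h2 hp
    exfalso
    have h1 := two_pow_le_prod l h2
    have h3 : (2:ℕ) ^ 7 ≤ 2 ^ l.length := Nat.pow_le_pow_right (by norm_num) (by omega)
    have h4 : (2:ℕ) ^ 7 = 128 := by norm_num
    omega
  | succ n ih =>
    intro l hl h2 hp
    by_cases hall : ∀ x ∈ l, Nat.Prime x
    · exact lfact_primes l hall hp
    · push_neg at hall
      obtain ⟨x, hxl, hxnp⟩ := hall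
      have hx2 : 2 ≤ x := h2 x hxl
      obtain ⟨l1, l2, rfl⟩ := List.append_of_mem hxl
      obtain ⟨dd, hdvd, hd2, hdlt⟩ := Nat.exists_dvd_of_not_prime2 hx2 hxnp
      obtain ⟨ee, rfl⟩ := hdvd
      have he2 : 2 ≤ ee := by
        rcases ee with _ | _ | ee
        · simp at hx2
        · simp at hdlt
        · omega
      have hprod' : (l1 ++ dd :: ee :: l2).prod = 120 := by
        rw [List.prod_append, List.prod_cons, List.prod_cons, ← mul_assoc]
        rw [List.prod_append, List.prod_cons] at hp
        linarith [hp]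
      have hlfact : LFact (l1 ++ dd :: ee :: l2) := by
        apply ih _ _ _ hprod'
        · simp only [List.length_append, List.length_cons] at hl ⊢
          omega
        · intro y hy
          simp only [List.mem_append, List.mem_cons] at hy
          rcases hy with hy | hy | hy | hy
          · exact h2 y (by simp [hy])
          · omega
          · omega
          · exact h2 y (by simp [hy])
      exact lfact_merge l1 l2 dd ee hprod' hlfact

/-- The symmetric group `S₅` on five letters is multifold-factorizable. -/
theorem isMultifoldFactorizable_symmetricGroupFive :
    IsMultifoldFactorizable (Equiv.Perm (Fin 5)) := by
  intro k hk a ha hcard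
  have hc120 : Nat.card G5 = 120 := by
    rw [Nat.card_eq_fintype_card, Fintype.card_perm]
    decide
  have h120 : (List.ofFn a).prod = 120 := by
    rw [List.prod_ofFn, ← hcard, hc120]
  have hL := lfact_all 7 (List.ofFn a) (by omega) ?ent h120
  case ent =>
    intro x hx
    rw [List.mem_ofFn] at hx
    obtain ⟨i, rfl⟩ := hx
    exact ha i
  obtain ⟨L, hmap, hprod⟩ := hL
  have hlen : L.length = k := by
    have := congrArg List.length hmap
    simpa using this
  refine ⟨fun i => L[(i : ℕ)]'(by omega), ?_, hcard, ?_⟩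
  · intro i
    have h1 : (List.map (fun s : Set G5 => Nat.card s) L)[(i : ℕ)]'(by simp [hlen]) =
        (List.ofFn a)[(i : ℕ)]'(by simp) := by
      simp only [hmap]
    simpa using h1
  · have heq : List.ofFn (fun i : Fin k => L[(i : ℕ)]'(by omega)) = L := by
      apply List.ext_getElem (by simp [hlen])
      intro i h1 h2
      simp
    rw [heq, hprod]
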